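/- Let T = 2 and consider martingale couplings of (X, Y) ∈ ℝ^d × ℝ^d with one-dimensional marginals X_i ∼ μ_i, Y_i ∼ ν_i having finite second moments. Let c(Y) = Σ_{1≤i<j≤d} c_{ij} Y_i Y_j with c_{ij} ≥ 0 inducing a connected graph on {1,…,d}, and suppose the marginals (μ_i, ν_i)_{1≤i≤d} satisfy LIM with positive constants a = (a_1,…,a_d) and non-Dirac centered measure κ. Let L be the one-dimensional subspace of ℝ^d spanned by a. Then every maximizer π of the MMOT problem sup_{π ∈ ℳ(μ,ν)} ∫ c dπ, when disintegrated as π(dx,dy) = π_x(dy) π¹(dx) over its first marginal π¹ = π∘X^{-1}, satisfies: (1) supp π_x ⊆ L + x for π¹-almost every x; and (2) π¹ is an optimal transport plan in Π(μ_1,…,μ_d) for the maximization problem with cost c(X) = Σ_{1≤i<j≤d} c_{ij} X_i X_j. -/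

import Mathlib

open MeasureTheory Filter

namespace MMOT

/-- `ℝ^d`. -/
abbrev Vec (d : ℕ) := Fin d → ℝ

/-- The set `ℳ(μ,ν)` of martingale couplings: laws of `(X,Y)` with `X_i ∼ μ_i`, `Y_i ∼ ν_i`
and `E[Y|X] = X`. -/
def PairMartSet {d : ℕ} (μ ν : Fin d → Measure ℝ) : Set (Measure (Vec d × Vec d)) :=
  {π | IsProbabilityMeasure π ∧
    (∀ i, π.map (fun p => p.1 i) = μ i) ∧
    (∀ i, π.map (fun p => p.2 i) = ν i) ∧
    (∀ i, (π[fun p => p.2 i | MeasurableSpace.comap Prod.fst inferInstance])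
      =ᵐ[π] fun p => p.1 i)}

/-- Linear Increment of Marginals: `ν_i = μ_i * (a_i)_#κ` for a centered non-Dirac
probability measure `κ`, i.e. `law(Y_i) = law(X_i + a_i Z)` with `Z ∼ κ` independent,
`E[Z] = 0` and `P[Z ≠ 0] > 0`. -/
def LIM {d : ℕ} (μ ν : Fin d → Measure ℝ) (a : Fin d → ℝ) (κ : Measure ℝ) : Prop :=
  IsProbabilityMeasure κ ∧ Integrable (fun z : ℝ => z) κ ∧ (∫ z, z ∂κ) = 0 ∧
    κ {(0 : ℝ)}ᶜ ≠ 0 ∧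
    ∀ i, ν i = ((μ i).prod (κ.map fun z => a i * z)).map fun p => p.1 + p.2

/-- The covariance cost `Σ_{i<j} c_{ij} y_i y_j`. -/
noncomputable def covCost {d : ℕ} (c : Fin d → Fin d → ℝ) (y : Vec d) : ℝ :=
  ∑ i, ∑ j, if i < j then c i j * y i * y j else 0

/-- Adjacency relation of the graph induced by the coefficients `c_{ij}`, `i < j`. -/
def AdjRel {d : ℕ} (c : Fin d → Fin d → ℝ) (i j : Fin d) : Prop :=
  (i < j ∧ 0 < c i j) ∨ (j < i ∧ 0 < c j i)

/-- `π` is a maximizer of the MMOT problem `sup_{π ∈ ℳ(μ,ν)} ∫ c(y) π(dx,dy)`. -/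
def IsMaximizer {d : ℕ} (μ ν : Fin d → Measure ℝ) (c : Fin d → Fin d → ℝ)
    (π : Measure (Vec d × Vec d)) : Prop :=
  π ∈ PairMartSet μ ν ∧
    ∀ π' ∈ PairMartSet μ ν, ∫ p, covCost c p.2 ∂π' ≤ ∫ p, covCost c p.2 ∂π

/-! ### Auxiliary lemmas -/

section Aux

variable {d : ℕ}

lemma measurable_X (i : Fin d) : Measurable (fun p : Vec d × Vec d => p.1 i) :=
  (measurable_pi_apply i).comp measurable_fst

lemma measurable_Y (i : Fin d) : Measurable (fun p : Vec d × Vec d => p.2 i) :=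
  (measurable_pi_apply i).comp measurable_snd

lemma integrable_mul_of_memL2 {α : Type*} [MeasurableSpace α] {ρ : Measure α} {f g : α → ℝ}
    (hf : MemLp f 2 ρ) (hg : MemLp g 2 ρ) : Integrable (fun x => f x * g x) ρ := by
  have h1 := hf.integrable_sq
  have h2 := hg.integrable_sq
  refine Integrable.mono' ((h1.add h2).div_const 2)
    (hf.aestronglyMeasurable.mul hg.aestronglyMeasurable) (Eventually.of_forall fun x => ?_)
  simp only [Pi.add_apply]
  rw [Real.norm_eq_abs, abs_mul]
  nlinarith [sq_abs (f x), sq_abs (g x), sq_nonneg (|f x| - |g x|)]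

lemma memL2_of_map {α : Type*} [MeasurableSpace α] {ρ : Measure α} {f : α → ℝ}
    (hf : Measurable f) {m : Measure ℝ}
    (hmap : ρ.map f = m) (h2 : Integrable (fun x : ℝ => x ^ 2) m) : MemLp f 2 ρ := by
  rw [memLp_two_iff_integrable_sq hf.aestronglyMeasurable]
  have : Integrable (fun x : ℝ => x ^ 2) (ρ.map f) := hmap ▸ h2
  rwa [integrable_map_measure (by fun_prop) hf.aemeasurable] at this

lemma integral_sq_of_map {α : Type*} [MeasurableSpace α] {ρ : Measure α} {f : α → ℝ}
    (hf : Measurable f) {m : Measure ℝ}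
    (hmap : ρ.map f = m) : ∫ x, f x ^ 2 ∂ρ = ∫ x, x ^ 2 ∂m := by
  rw [← hmap, integral_map hf.aemeasurable
    (by apply Measurable.aestronglyMeasurable; fun_prop)]

lemma stronglyMeasurable_comap_X (i : Fin d) :
    StronglyMeasurable[MeasurableSpace.comap (Prod.fst : Vec d × Vec d → Vec d) inferInstance]
      (fun p : Vec d × Vec d => p.1 i) := by
  apply Measurable.stronglyMeasurable
  intro s hs
  exact ⟨(fun x : Vec d => x i) ⁻¹' s, measurable_pi_apply i hs, rfl⟩

section Mart

variable {ρ : Measure (Vec d × Vec d)} [IsProbabilityMeasure ρ]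

lemma mart_integral_mul (i j : Fin d)
    (hy : Integrable (fun p => p.2 j) ρ)
    (hmul : Integrable (fun p => p.1 i * p.2 j) ρ)
    (hcond : (ρ[fun p => p.2 j | MeasurableSpace.comap Prod.fst inferInstance])
      =ᵐ[ρ] fun p => p.1 j) :
    ∫ p, p.1 i * p.2 j ∂ρ = ∫ p, p.1 i * p.1 j ∂ρ := by
  have hm : (MeasurableSpace.comap (Prod.fst : Vec d × Vec d → Vec d) inferInstance)
      ≤ (Prod.instMeasurableSpace : MeasurableSpace (Vec d × Vec d)) := measurable_fst.comap_le
  haveI : SigmaFinite (ρ.trim hm) := by infer_instance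
  have hfg : (fun p : Vec d × Vec d => p.1 i * p.2 j)
      = (fun p : Vec d × Vec d => p.1 i) * (fun p : Vec d × Vec d => p.2 j) := rfl
  have hpull := condExp_mul_of_stronglyMeasurable_left (μ := ρ) (stronglyMeasurable_comap_X i)
    (hfg ▸ hmul) hy
  rw [← hfg] at hpull
  calc ∫ p, p.1 i * p.2 j ∂ρ
      = ∫ p, (ρ[fun p => p.1 i * p.2 j | MeasurableSpace.comap Prod.fst inferInstance]) p ∂ρ :=
        (integral_condExp hm).symm
    _ = ∫ p, p.1 i * p.1 j ∂ρ := by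
        refine integral_congr_ae ?_
        filter_upwards [hpull, hcond] with p h1 h2
        rw [h1]
        simp only [Pi.mul_apply]
        rw [h2]

lemma cross_eq (i j : Fin d)
    (hXi : MemLp (fun p : Vec d × Vec d => p.1 i) 2 ρ)
    (hXj : MemLp (fun p : Vec d × Vec d => p.1 j) 2 ρ)
    (hYi : MemLp (fun p : Vec d × Vec d => p.2 i) 2 ρ)
    (hYj : MemLp (fun p : Vec d × Vec d => p.2 j) 2 ρ)
    (hcondi : (ρ[fun p => p.2 i | MeasurableSpace.comap Prod.fst inferInstance])
      =ᵐ[ρ] fun p => p.1 i)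
    (hcondj : (ρ[fun p => p.2 j | MeasurableSpace.comap Prod.fst inferInstance])
      =ᵐ[ρ] fun p => p.1 j) :
    ∫ p, (p.2 i - p.1 i) * (p.2 j - p.1 j) ∂ρ
      = (∫ p, p.2 i * p.2 j ∂ρ) - ∫ p, p.1 i * p.1 j ∂ρ := by
  have iYY : Integrable (fun p : Vec d × Vec d => p.2 i * p.2 j) ρ :=
    integrable_mul_of_memL2 hYi hYj
  have iXY : Integrable (fun p : Vec d × Vec d => p.1 i * p.2 j) ρ :=
    integrable_mul_of_memL2 hXi hYj
  have iYX : Integrable (fun p : Vec d × Vec d => p.2 i * p.1 j) ρ :=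
    integrable_mul_of_memL2 hYi hXj
  have iXX : Integrable (fun p : Vec d × Vec d => p.1 i * p.1 j) ρ :=
    integrable_mul_of_memL2 hXi hXj
  have hexp : (fun p : Vec d × Vec d => (p.2 i - p.1 i) * (p.2 j - p.1 j))
      = fun p : Vec d × Vec d =>
          p.2 i * p.2 j - p.1 i * p.2 j - (p.2 i * p.1 j - p.1 i * p.1 j) := by
    funext p; ring
  have iA : Integrable (fun p : Vec d × Vec d => p.2 i * p.2 j - p.1 i * p.2 j) ρ := iYY.sub iXY
  have iB : Integrable (fun p : Vec d × Vec d => p.2 i * p.1 j - p.1 i * p.1 j) ρ := iYX.sub iXX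
  rw [hexp, integral_sub iA iB, integral_sub iYY iXY, integral_sub iYX iXX]
  have e1 : ∫ p, p.1 i * p.2 j ∂ρ = ∫ p, p.1 i * p.1 j ∂ρ :=
    mart_integral_mul i j (hYj.integrable one_le_two) iXY hcondj
  have e2 : ∫ p, p.2 i * p.1 j ∂ρ = ∫ p, p.1 i * p.1 j ∂ρ := by
    have h' : ∫ p, p.2 i * p.1 j ∂ρ = ∫ p, p.1 j * p.2 i ∂ρ := by
      congr 1; funext p; ring
    rw [h', mart_integral_mul j i (hYi.integrable one_le_two)
      (integrable_mul_of_memL2 hXj hYi) hcondi]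
    congr 1; funext p; ring
  rw [e1, e2]
  ring

lemma covBound_key (i j : Fin d)
    (hXi : MemLp (fun p : Vec d × Vec d => p.1 i) 2 ρ)
    (hXj : MemLp (fun p : Vec d × Vec d => p.1 j) 2 ρ)
    (hYi : MemLp (fun p : Vec d × Vec d => p.2 i) 2 ρ)
    (hYj : MemLp (fun p : Vec d × Vec d => p.2 j) 2 ρ)
    {ai aj vi vj : ℝ}
    (hvi : ∫ p, (p.2 i - p.1 i) * (p.2 i - p.1 i) ∂ρ = vi)
    (hvj : ∫ p, (p.2 j - p.1 j) * (p.2 j - p.1 j) ∂ρ = vj) :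
    ∫ p, (aj * (p.2 i - p.1 i) - ai * (p.2 j - p.1 j)) ^ 2 ∂ρ
      = aj ^ 2 * vi + ai ^ 2 * vj
        - 2 * ai * aj * ∫ p, (p.2 i - p.1 i) * (p.2 j - p.1 j) ∂ρ := by
  have hUi : MemLp (fun p : Vec d × Vec d => p.2 i - p.1 i) 2 ρ := hYi.sub hXi
  have hUj : MemLp (fun p : Vec d × Vec d => p.2 j - p.1 j) 2 ρ := hYj.sub hXj
  have iUiUi := integrable_mul_of_memL2 hUi hUi
  have iUjUj := integrable_mul_of_memL2 hUj hUj
  have iUiUj := integrable_mul_of_memL2 hUi hUj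
  have hexp : (fun p : Vec d × Vec d => (aj * (p.2 i - p.1 i) - ai * (p.2 j - p.1 j)) ^ 2)
      = fun p : Vec d × Vec d =>
          aj ^ 2 * ((p.2 i - p.1 i) * (p.2 i - p.1 i))
          + ai ^ 2 * ((p.2 j - p.1 j) * (p.2 j - p.1 j))
          - 2 * ai * aj * ((p.2 i - p.1 i) * (p.2 j - p.1 j)) := by
    funext p; ring
  have iC : Integrable (fun p : Vec d × Vec d =>
      aj ^ 2 * ((p.2 i - p.1 i) * (p.2 i - p.1 i))
        + ai ^ 2 * ((p.2 j - p.1 j) * (p.2 j - p.1 j))) ρ :=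
    (iUiUi.const_mul _).add (iUjUj.const_mul _)
  have iD : Integrable (fun p : Vec d × Vec d =>
      2 * ai * aj * ((p.2 i - p.1 i) * (p.2 j - p.1 j))) ρ := iUiUj.const_mul _
  have iE : Integrable (fun p : Vec d × Vec d =>
      aj ^ 2 * ((p.2 i - p.1 i) * (p.2 i - p.1 i))) ρ := iUiUi.const_mul _
  have iF : Integrable (fun p : Vec d × Vec d =>
      ai ^ 2 * ((p.2 j - p.1 j) * (p.2 j - p.1 j))) ρ := iUjUj.const_mul _
  rw [hexp, integral_sub iC iD, integral_add iE iF, integral_const_mul, integral_const_mul,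
    integral_const_mul, hvi, hvj]

lemma int_term_gen {f : Vec d × Vec d → Vec d} (c : Fin d → Fin d → ℝ)
    (hf : ∀ i, MemLp (fun p : Vec d × Vec d => f p i) 2 ρ) (i j : Fin d) :
    Integrable (fun p => if i < j then c i j * f p i * f p j else 0) ρ := by
  by_cases h : i < j
  · simp only [if_pos h]
    have := (integrable_mul_of_memL2 (hf i) (hf j)).const_mul (c i j)
    exact this.congr (ae_of_all _ fun p => by ring)
  · simp only [if_neg h]
    exact integrable_const 0

lemma sum_covCost {f : Vec d × Vec d → Vec d} (c : Fin d → Fin d → ℝ)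
    (hf : ∀ i, MemLp (fun p : Vec d × Vec d => f p i) 2 ρ) :
    ∫ p, covCost c (f p) ∂ρ
      = ∑ i, ∑ j, if i < j then c i j * ∫ p, f p i * f p j ∂ρ else 0 := by
  simp only [covCost]
  rw [integral_finset_sum _ (fun i _ => integrable_finset_sum _ fun j _ => int_term_gen c hf i j)]
  refine Finset.sum_congr rfl fun i _ => ?_
  rw [integral_finset_sum _ fun j _ => int_term_gen c hf i j]
  refine Finset.sum_congr rfl fun j _ => ?_
  by_cases h : i < j
  · simp only [if_pos h]
    have h' : (fun p => c i j * f p i * f p j) = fun p => c i j * (f p i * f p j) := by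
      funext p; ring
    rw [h', integral_const_mul]
  · simp only [if_neg h, integral_zero]

lemma value_decomp (c : Fin d → Fin d → ℝ)
    (hX : ∀ i, MemLp (fun p : Vec d × Vec d => p.1 i) 2 ρ)
    (hY : ∀ i, MemLp (fun p : Vec d × Vec d => p.2 i) 2 ρ)
    (hcond : ∀ i, (ρ[fun p => p.2 i | MeasurableSpace.comap Prod.fst inferInstance])
      =ᵐ[ρ] fun p => p.1 i) :
    ∫ p, covCost c p.2 ∂ρ
      = (∫ p, covCost c p.1 ∂ρ)
        + ∑ i, ∑ j, (if i < j then
            c i j * ∫ p, (p.2 i - p.1 i) * (p.2 j - p.1 j) ∂ρ else 0) := by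
  rw [sum_covCost (f := fun p => p.2) c hY, sum_covCost (f := fun p => p.1) c hX,
    ← Finset.sum_add_distrib]
  refine Finset.sum_congr rfl fun i _ => ?_
  rw [← Finset.sum_add_distrib]
  refine Finset.sum_congr rfl fun j _ => ?_
  by_cases h : i < j
  · simp only [if_pos h]
    rw [cross_eq i j (hX i) (hX j) (hY i) (hY j) (hcond i) (hcond j)]
    ring
  · simp [if_neg h]

end Mart

/-! ### LIM moments -/

lemma lim_moments {μi κ : Measure ℝ} [IsProbabilityMeasure μi] [IsProbabilityMeasure κ]
    (hμ2 : Integrable (fun x : ℝ => x ^ 2) μi) {ai : ℝ} (hai : 0 < ai)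
    (hκ1 : Integrable (fun z : ℝ => z) κ) (hκ0 : (∫ z, z ∂κ) = 0)
    {νi : Measure ℝ} (hνi : νi = (μi.prod (κ.map fun z => ai * z)).map fun p => p.1 + p.2)
    (hν2 : Integrable (fun x : ℝ => x ^ 2) νi) :
    Integrable (fun z : ℝ => z ^ 2) κ ∧
      (∫ y, y ^ 2 ∂νi) = (∫ x, x ^ 2 ∂μi) + ai ^ 2 * ∫ z, z ^ 2 ∂κ := by
  set κi : Measure ℝ := κ.map fun z => ai * z with hκi_def
  haveI : IsProbabilityMeasure κi := Measure.isProbabilityMeasure_map (by fun_prop)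
  set P : Measure (ℝ × ℝ) := μi.prod κi with hP_def
  have hadd : Measurable (fun p : ℝ × ℝ => p.1 + p.2) := measurable_fst.add measurable_snd
  have h1 : Integrable (fun p : ℝ × ℝ => (p.1 + p.2) ^ 2) P := by
    have h := hν2
    rw [hνi, integrable_map_measure (by fun_prop) hadd.aemeasurable] at h
    exact h
  have h2 : Integrable (fun z : ℝ => z ^ 2) κi := by
    have hae : ∀ᵐ x ∂μi, Integrable (fun z => (x + z) ^ 2) κi := h1.prod_right_ae
    obtain ⟨x, hx⟩ := hae.exists
    have hbig : Integrable (fun z : ℝ => 2 * (x + z) ^ 2 + 2 * x ^ 2) κi :=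
      (hx.const_mul 2).add (integrable_const _)
    refine Integrable.mono' hbig (by fun_prop) (ae_of_all _ fun z => ?_)
    rw [Real.norm_eq_abs, abs_of_nonneg (sq_nonneg _)]
    nlinarith [sq_nonneg (2 * x + z)]
  have hκ2 : Integrable (fun z : ℝ => z ^ 2) κ := by
    rw [hκi_def, integrable_map_measure (by fun_prop) (by fun_prop)] at h2
    have h3 := h2.const_mul (1 / ai ^ 2)
    refine h3.congr (ae_of_all _ fun z => ?_)
    simp only [Function.comp]
    field_simp
  refine ⟨hκ2, ?_⟩
  have hκi1 : Integrable (fun z : ℝ => z) κi := by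
    rw [hκi_def]
    exact (integrable_map_measure measurable_id.aestronglyMeasurable (by fun_prop)).2
      (hκ1.const_mul ai)
  have hκi0 : (∫ z, z ∂κi) = 0 := by
    rw [hκi_def, integral_map (by fun_prop) (by apply Measurable.aestronglyMeasurable; fun_prop),
      integral_const_mul, hκ0, mul_zero]
  have hκi2 : (∫ z, z ^ 2 ∂κi) = ai ^ 2 * ∫ z, z ^ 2 ∂κ := by
    rw [hκi_def, integral_map (by fun_prop) (by apply Measurable.aestronglyMeasurable; fun_prop)]
    simp_rw [mul_pow]
    rw [integral_const_mul]
  have hμ1 : Integrable (fun x : ℝ => x) μi :=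
    ((memLp_two_iff_integrable_sq aestronglyMeasurable_id).2 hμ2).integrable one_le_two
  have hν2' : (∫ y, y ^ 2 ∂νi) = ∫ p, (p.1 + p.2) ^ 2 ∂P := by
    rw [hνi, integral_map hadd.aemeasurable (by apply Measurable.aestronglyMeasurable; fun_prop)]
  have i1 : Integrable (fun p : ℝ × ℝ => p.1 ^ 2 * 1) P := hμ2.mul_prod (integrable_const 1)
  have i2 : Integrable (fun p : ℝ × ℝ => (2 * p.1) * p.2) P := (hμ1.const_mul 2).mul_prod hκi1
  have i3 : Integrable (fun p : ℝ × ℝ => (1 : ℝ) * p.2 ^ 2) P := (integrable_const 1).mul_prod h2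
  have hexp : (fun p : ℝ × ℝ => (p.1 + p.2) ^ 2)
      = fun p : ℝ × ℝ => p.1 ^ 2 * 1 + ((2 * p.1) * p.2 + 1 * p.2 ^ 2) := by
    funext p; ring
  have i23 : Integrable (fun p : ℝ × ℝ => (2 * p.1) * p.2 + 1 * p.2 ^ 2) P := i2.add i3
  rw [hν2', hexp, integral_add i1 i23, integral_add i2 i3, hP_def,
    integral_prod_mul (fun x : ℝ => x ^ 2) (fun _ : ℝ => (1 : ℝ)),
    integral_prod_mul (fun x : ℝ => 2 * x) (fun z : ℝ => z),
    integral_prod_mul (fun _ : ℝ => (1 : ℝ)) (fun z : ℝ => z ^ 2), hκi0, hκi2]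
  simp

/-! ### The competitor coupling -/

noncomputable def comp2 (γ : Measure (Vec d)) (κ : Measure ℝ) (a : Fin d → ℝ) :
    Measure (Vec d × Vec d) :=
  (γ.prod κ).map (fun q => (q.1, q.1 + q.2 • a))

lemma measurable_T (a : Fin d → ℝ) :
    Measurable (fun q : Vec d × ℝ => (q.1, q.1 + q.2 • a)) := by
  refine measurable_fst.prodMk ?_
  exact measurable_pi_lambda _ fun i =>
    ((measurable_pi_apply i).comp measurable_fst).add (measurable_snd.mul measurable_const)

lemma comp2_map_fst (γ : Measure (Vec d)) (κ : Measure ℝ) (a : Fin d → ℝ)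
    [SFinite γ] [IsProbabilityMeasure κ] :
    (comp2 γ κ a).map Prod.fst = γ := by
  rw [comp2, Measure.map_map measurable_fst (measurable_T a)]
  have h : (Prod.fst ∘ fun q : Vec d × ℝ => (q.1, q.1 + q.2 • a)) = Prod.fst := rfl
  rw [h]
  exact Measure.fst_prod

lemma comp2_map_X (γ : Measure (Vec d)) (κ : Measure ℝ) (a : Fin d → ℝ)
    [SFinite γ] [IsProbabilityMeasure κ] (i : Fin d) :
    (comp2 γ κ a).map (fun p => p.1 i) = γ.map (fun x => x i) := by
  rw [comp2, Measure.map_map (show Measurable fun p : Vec d × Vec d => p.1 i by fun_prop)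
    (measurable_T a)]
  have h : ((fun p : Vec d × Vec d => p.1 i) ∘ fun q : Vec d × ℝ => (q.1, q.1 + q.2 • a))
      = ((fun x : Vec d => x i) ∘ Prod.fst) := rfl
  rw [h, ← Measure.map_map (measurable_pi_apply i) measurable_fst]
  congr 1
  exact Measure.fst_prod

lemma comp2_map_Y (γ : Measure (Vec d)) (κ : Measure ℝ) (a : Fin d → ℝ)
    [SFinite γ] [IsProbabilityMeasure κ] (i : Fin d) {μi : Measure ℝ} [SFinite μi]
    (hmarg : γ.map (fun x => x i) = μi) :
    (comp2 γ κ a).map (fun p => p.2 i)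
      = (μi.prod (κ.map fun z => a i * z)).map fun p => p.1 + p.2 := by
  rw [comp2, Measure.map_map (show Measurable fun p : Vec d × Vec d => p.2 i by fun_prop)
    (measurable_T a)]
  have h1 : ((fun p : Vec d × Vec d => p.2 i) ∘ fun q : Vec d × ℝ => (q.1, q.1 + q.2 • a))
      = fun q : Vec d × ℝ => q.1 i + a i * q.2 := by
    funext q
    simp [Function.comp, Pi.add_apply, Pi.smul_apply, smul_eq_mul, mul_comm]
  rw [h1, ← hmarg, Measure.map_prod_map _ _ (measurable_pi_apply i) (by fun_prop),
    Measure.map_map (show Measurable fun p : ℝ × ℝ => p.1 + p.2 by fun_prop)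
      ((measurable_pi_apply i).prodMap (by fun_prop))]
  rfl

lemma comp2_cond (γ : Measure (Vec d)) (κ : Measure ℝ) (a : Fin d → ℝ)
    [IsProbabilityMeasure γ] [IsProbabilityMeasure κ]
    (hκ1 : Integrable (fun z : ℝ => z) κ) (hκ0 : (∫ z, z ∂κ) = 0) (i : Fin d)
    (hintY : Integrable (fun p : Vec d × Vec d => p.2 i) (comp2 γ κ a))
    (hintX : Integrable (fun p : Vec d × Vec d => p.1 i) (comp2 γ κ a)) :
    ((comp2 γ κ a)[fun p => p.2 i | MeasurableSpace.comap Prod.fst inferInstance])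
      =ᵐ[comp2 γ κ a] fun p => p.1 i := by
  set π' := comp2 γ κ a with hπ'_def
  haveI : IsProbabilityMeasure π' := Measure.isProbabilityMeasure_map (measurable_T a).aemeasurable
  have hm : (MeasurableSpace.comap (Prod.fst : Vec d × Vec d → Vec d) inferInstance)
      ≤ (Prod.instMeasurableSpace : MeasurableSpace (Vec d × Vec d)) :=
    measurable_fst.comap_le
  haveI : SigmaFinite (π'.trim hm) := by infer_instance
  have hX1γ : Integrable (fun q : Vec d × ℝ => q.1 i) (γ.prod κ) := by
    have := (integrable_map_measure (measurable_X (d := d) i).aestronglyMeasurable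
      (measurable_T a).aemeasurable).1 (hπ'_def ▸ hintX)
    exact this
  have hZ : Integrable (fun q : Vec d × ℝ => q.2 * a i) (γ.prod κ) := by
    have h := (integrable_const (1 : ℝ)).mul_prod (hκ1.mul_const (a i)) (μ := γ) (ν := κ)
    exact h.congr (ae_of_all _ fun q => by simp)
  refine (ae_eq_condExp_of_forall_setIntegral_eq hm hintY
    (fun s _ _ => hintX.integrableOn)
    (fun s hs hμs => ?_)
    ((stronglyMeasurable_comap_X i).aestronglyMeasurable)).symm
  obtain ⟨t, ht, rfl⟩ := hs
  have htm : MeasurableSet ((Prod.fst : Vec d × Vec d → Vec d) ⁻¹' t) :=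
    (measurable_fst : Measurable (Prod.fst : Vec d × Vec d → Vec d)) ht
  rw [hπ'_def, comp2, setIntegral_map htm (measurable_X i).aestronglyMeasurable
      (measurable_T a).aemeasurable,
    setIntegral_map htm (measurable_Y i).aestronglyMeasurable (measurable_T a).aemeasurable]
  have hpre : ((fun q : Vec d × ℝ => (q.1, q.1 + q.2 • a)) ⁻¹'
      ((Prod.fst : Vec d × Vec d → Vec d) ⁻¹' t)) = (Prod.fst : Vec d × ℝ → Vec d) ⁻¹' t := rfl
  rw [hpre]
  have hY' : (fun q : Vec d × ℝ => ((q.1, q.1 + q.2 • a) : Vec d × Vec d).2 i)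
      = fun q : Vec d × ℝ => q.1 i + q.2 * a i := by
    funext q; simp [Pi.add_apply, smul_eq_mul]
  have hX' : (fun q : Vec d × ℝ => ((q.1, q.1 + q.2 • a) : Vec d × Vec d).1 i)
      = fun q : Vec d × ℝ => q.1 i := rfl
  rw [hY', hX']
  have hsplit : ∫ q in (Prod.fst : Vec d × ℝ → Vec d) ⁻¹' t, (q.1 i + q.2 * a i) ∂(γ.prod κ)
      = (∫ q in (Prod.fst : Vec d × ℝ → Vec d) ⁻¹' t, q.1 i ∂(γ.prod κ))
        + ∫ q in (Prod.fst : Vec d × ℝ → Vec d) ⁻¹' t, q.2 * a i ∂(γ.prod κ) :=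
    integral_add hX1γ.integrableOn hZ.integrableOn
  have hzero : ∫ q in (Prod.fst : Vec d × ℝ → Vec d) ⁻¹' t, q.2 * a i ∂(γ.prod κ) = 0 := by
    have hset : (Prod.fst : Vec d × ℝ → Vec d) ⁻¹' t = t ×ˢ Set.univ := by
      rw [Set.prod_univ]
    rw [hset, ← Measure.prod_restrict, Measure.restrict_univ]
    have heq : ∫ q, q.2 * a i ∂((γ.restrict t).prod κ)
        = (∫ _x, (1 : ℝ) ∂γ.restrict t) * ∫ z, z * a i ∂κ := by
      rw [← integral_prod_mul (fun _ : Vec d => (1 : ℝ)) (fun z : ℝ => z * a i)]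
      simp
    rw [heq, integral_mul_const, hκ0]
    simp
  rw [hsplit, hzero, add_zero]

lemma measurable_covCost (c : Fin d → Fin d → ℝ) : Measurable (covCost c) := by
  unfold covCost
  refine Finset.measurable_sum _ fun i _ => Finset.measurable_sum _ fun j _ => ?_
  by_cases h : i < j
  · simp only [if_pos h]
    fun_prop
  · simp only [if_neg h]
    exact measurable_const

lemma integral_covCost_fst (c : Fin d → Fin d → ℝ) (ρ : Measure (Vec d × Vec d)) :
    ∫ p, covCost c p.1 ∂ρ = ∫ x, covCost c x ∂(ρ.map Prod.fst) := by
  rw [integral_map measurable_fst.aemeasurable (measurable_covCost c).aestronglyMeasurable]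

lemma comp2_inc_integral (γ : Measure (Vec d)) (κ : Measure ℝ) (a : Fin d → ℝ)
    [IsProbabilityMeasure γ] [IsProbabilityMeasure κ] (i j : Fin d) :
    ∫ p, (p.2 i - p.1 i) * (p.2 j - p.1 j) ∂(comp2 γ κ a)
      = a i * a j * ∫ z, z ^ 2 ∂κ := by
  rw [comp2, integral_map (measurable_T a).aemeasurable
    (by apply Measurable.aestronglyMeasurable; fun_prop)]
  have heq : ∀ q : Vec d × ℝ,
      (((q.1, q.1 + q.2 • a) : Vec d × Vec d).2 i - ((q.1, q.1 + q.2 • a) : Vec d × Vec d).1 i)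
        * (((q.1, q.1 + q.2 • a) : Vec d × Vec d).2 j - ((q.1, q.1 + q.2 • a) : Vec d × Vec d).1 j)
      = (1 : ℝ) * (a i * a j * q.2 ^ 2) := by
    intro q
    simp only [Pi.add_apply, Pi.smul_apply, smul_eq_mul]
    ring
  rw [integral_congr_ae (ae_of_all _ heq), integral_prod_mul (fun _ : Vec d => (1 : ℝ))
    (fun z : ℝ => a i * a j * z ^ 2), integral_const_mul]
  simp

/-! ### Geometry and kernels -/

lemma measurableSet_line (a : Fin d → ℝ) (i0 : Fin d) (ha : a i0 ≠ 0) :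
    MeasurableSet {p : Vec d × Vec d | ∃ s : ℝ, p.2 = p.1 + s • a} := by
  have hset : {p : Vec d × Vec d | ∃ s : ℝ, p.2 = p.1 + s • a}
      = {p : Vec d × Vec d | p.2 = p.1 + ((p.2 i0 - p.1 i0) / a i0) • a} := by
    ext p
    constructor
    · rintro ⟨s, hs⟩
      have h0 : p.2 i0 = p.1 i0 + s * a i0 := by rw [hs]; simp
      have hs' : (p.2 i0 - p.1 i0) / a i0 = s := by
        rw [h0]; field_simp; ring
      simp only [Set.mem_setOf_eq, hs']
      exact hs
    · intro h
      exact ⟨_, h⟩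
  rw [hset]
  have hf : Measurable (fun p : Vec d × Vec d => p.2) := measurable_snd
  have hg : Measurable (fun p : Vec d × Vec d => p.1 + ((p.2 i0 - p.1 i0) / a i0) • a) := by
    apply measurable_pi_lambda
    intro j
    simp only [Pi.add_apply, Pi.smul_apply, smul_eq_mul]
    fun_prop
  exact measurableSet_eq_fun hf hg

lemma conn_ae (c : Fin d → Fin d → ℝ) (a : Fin d → ℝ) (ha : ∀ i, 0 < a i)
    (hconn : ∀ i j : Fin d, Relation.ReflTransGen (AdjRel c) i j) (hd : 0 < d)
    {π : Measure (Vec d × Vec d)}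
    (hedge : ∀ i j, AdjRel c i j →
      (∀ᵐ p ∂π, a j * (p.2 i - p.1 i) = a i * (p.2 j - p.1 j))) :
    ∀ᵐ p ∂π, ∃ s : ℝ, p.2 = p.1 + s • a := by
  have hall : ∀ᵐ p ∂π, ∀ i j, AdjRel c i j →
      a j * (p.2 i - p.1 i) = a i * (p.2 j - p.1 j) := by
    rw [ae_all_iff]
    intro i
    rw [ae_all_iff]
    intro j
    by_cases hadj : AdjRel c i j
    · exact (hedge i j hadj).mono fun p hp => fun _ => hp
    · exact ae_of_all _ fun p h' => absurd h' hadj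
  filter_upwards [hall] with p hp
  set i0 : Fin d := ⟨0, hd⟩
  have claim : ∀ j, a j * (p.2 i0 - p.1 i0) = a i0 * (p.2 j - p.1 j) := by
    intro j
    induction hconn i0 j with
    | refl => ring
    | @tail b c' hab hrel ih =>
      have hc := hp b c' hrel
      have h2 : a b * (a c' * (p.2 i0 - p.1 i0)) = a b * (a i0 * (p.2 c' - p.1 c')) := by
        linear_combination a c' * ih + a i0 * hc
      exact mul_left_cancel₀ (ne_of_gt (ha b)) h2
  refine ⟨(p.2 i0 - p.1 i0) / a i0, ?_⟩
  funext j
  have hj := claim j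
  have hai0 : a i0 ≠ 0 := ne_of_gt (ha i0)
  simp only [Pi.add_apply, Pi.smul_apply, smul_eq_mul]
  field_simp
  linear_combination -hj

lemma kernel_transfer {π : Measure (Vec d × Vec d)} [IsFiniteMeasure π]
    (a : Fin d → ℝ) (i0 : Fin d) (hai0 : a i0 ≠ 0)
    (hS : π {p : Vec d × Vec d | ¬ ∃ s : ℝ, p.2 = p.1 + s • a} = 0) :
    ∀ᵐ x ∂π.fst, π.condKernel x {y : Vec d | ¬ ∃ s : ℝ, y = x + s • a} = 0 := by
  have hSc : MeasurableSet {p : Vec d × Vec d | ¬ ∃ s : ℝ, p.2 = p.1 + s • a} :=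
    (measurableSet_line a i0 hai0).compl
  rw [← π.disintegrate π.condKernel, Measure.compProd_apply hSc] at hS
  have hmeas : Measurable fun x =>
      π.condKernel x (Prod.mk x ⁻¹' {p : Vec d × Vec d | ¬ ∃ s : ℝ, p.2 = p.1 + s • a}) :=
    ProbabilityTheory.Kernel.measurable_kernel_prodMk_left hSc
  rw [lintegral_eq_zero_iff hmeas] at hS
  filter_upwards [hS] with x hx
  exact hx

end Aux


/-- Theorem: structure of MMOT optimizers for the covariance cost.
Under LIM marginals and a connected nonnegative coefficient graph, every maximizer `π`,
disintegrated over its first marginal as `π(dx,dy) = π_x(dy) π¹(dx)`, has kernels supported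
on the line `L + x` with `L = span{a}`, and its first marginal `π¹` is an optimal transport
plan in `Π(μ_1,…,μ_d)` for the cost `Σ_{i<j} c_{ij} x_i x_j`. -/
theorem mmot_covariance_structure {d : ℕ} (μ ν : Fin d → Measure ℝ)
    (hμprob : ∀ i, IsProbabilityMeasure (μ i)) (hνprob : ∀ i, IsProbabilityMeasure (ν i))
    (hμ2 : ∀ i, Integrable (fun x : ℝ => x ^ 2) (μ i))
    (hν2 : ∀ i, Integrable (fun x : ℝ => x ^ 2) (ν i))
    (c : Fin d → Fin d → ℝ) (hc : ∀ i j, i < j → 0 ≤ c i j)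
    (hconn : ∀ i j : Fin d, Relation.ReflTransGen (AdjRel c) i j)
    (a : Fin d → ℝ) (ha : ∀ i, 0 < a i)
    (κ : Measure ℝ) (hLIM : LIM μ ν a κ)
    (π : Measure (Vec d × Vec d)) (hπprob : IsProbabilityMeasure π)
    (hπ : IsMaximizer μ ν c π) :
    -- (1) the disintegration kernels are supported on `L + x`
    (∀ᵐ x ∂π.fst, π.condKernel x {y : Vec d | ¬ ∃ s : ℝ, y = x + s • a} = 0) ∧
    -- (2) the first marginal is an optimal transport plan for the cost `c(x)`
    ((∀ i, (π.map Prod.fst).map (fun x => x i) = μ i) ∧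
      ∀ γ : Measure (Vec d), IsProbabilityMeasure γ →
        (∀ i, γ.map (fun x => x i) = μ i) → Integrable (covCost c) γ →
        ∫ x, covCost c x ∂γ ≤ ∫ x, covCost c x ∂(π.map Prod.fst)) := by
  obtain ⟨hκprob, hκ1, hκ0, hκne, hνeq⟩ := hLIM
  obtain ⟨⟨hπprob', hπmx, hπmy, hπcond⟩, hπopt⟩ := hπ
  haveI := hκprob
  set σ2 : ℝ := ∫ z, z ^ 2 ∂κ with hσ2
  have hmom : ∀ i, (∫ y, y ^ 2 ∂(ν i)) = (∫ x, x ^ 2 ∂(μ i)) + (a i) ^ 2 * σ2 := by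
    intro i
    haveI := hμprob i
    exact (lim_moments (hμ2 i) (ha i) hκ1 hκ0 (hνeq i) (hν2 i)).2
  have hXL2 : ∀ i, MemLp (fun p : Vec d × Vec d => p.1 i) 2 π :=
    fun i => memL2_of_map (measurable_X i) (hπmx i) (hμ2 i)
  have hYL2 : ∀ i, MemLp (fun p : Vec d × Vec d => p.2 i) 2 π :=
    fun i => memL2_of_map (measurable_Y i) (hπmy i) (hν2 i)
  have hvar : ∀ i, ∫ p, (p.2 i - p.1 i) * (p.2 i - p.1 i) ∂π = (a i) ^ 2 * σ2 := by
    intro i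
    have hYY : ∫ p, p.2 i * p.2 i ∂π = ∫ y, y ^ 2 ∂(ν i) := by
      rw [← integral_sq_of_map (measurable_Y i) (hπmy i)]
      congr 1; funext p; ring
    have hXX : ∫ p, p.1 i * p.1 i ∂π = ∫ x, x ^ 2 ∂(μ i) := by
      rw [← integral_sq_of_map (measurable_X i) (hπmx i)]
      congr 1; funext p; ring
    rw [cross_eq i i (hXL2 i) (hXL2 i) (hYL2 i) (hYL2 i) (hπcond i) (hπcond i), hYY, hXX, hmom i]
    ring
  have hEle : ∀ i j, ∫ p, (p.2 i - p.1 i) * (p.2 j - p.1 j) ∂π ≤ a i * a j * σ2 := by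
    intro i j
    have hkey := covBound_key i j (hXL2 i) (hXL2 j) (hYL2 i) (hYL2 j) (ai := a i) (aj := a j) (hvar i) (hvar j)
    have h0 : (0:ℝ) ≤ ∫ p, (a j * (p.2 i - p.1 i) - a i * (p.2 j - p.1 j)) ^ 2 ∂π :=
      integral_nonneg fun p => sq_nonneg _
    nlinarith [mul_pos (ha i) (ha j)]
  have hdecompπ := value_decomp (ρ := π) c hXL2 hYL2 hπcond
  have hcomp : ∀ γ : Measure (Vec d), IsProbabilityMeasure γ →
      (∀ i, γ.map (fun x => x i) = μ i) →
      comp2 γ κ a ∈ PairMartSet μ ν ∧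
        ∫ p, covCost c p.2 ∂(comp2 γ κ a)
          = (∫ x, covCost c x ∂γ)
            + ∑ i, ∑ j, (if i < j then c i j * (a i * a j * σ2) else 0) := by
    intro γ hγp hγm
    haveI := hγp
    haveI : IsProbabilityMeasure (comp2 γ κ a) := by
      rw [comp2]; exact Measure.isProbabilityMeasure_map (measurable_T a).aemeasurable
    have hmx' : ∀ i, (comp2 γ κ a).map (fun p => p.1 i) = μ i := fun i => by
      rw [comp2_map_X, hγm i]
    have hmy' : ∀ i, (comp2 γ κ a).map (fun p => p.2 i) = ν i := fun i => by
      haveI := hμprob i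
      rw [comp2_map_Y γ κ a i (hγm i)]
      exact (hνeq i).symm
    have hXL2' : ∀ i, MemLp (fun p : Vec d × Vec d => p.1 i) 2 (comp2 γ κ a) :=
      fun i => memL2_of_map (measurable_X i) (hmx' i) (hμ2 i)
    have hYL2' : ∀ i, MemLp (fun p : Vec d × Vec d => p.2 i) 2 (comp2 γ κ a) :=
      fun i => memL2_of_map (measurable_Y i) (hmy' i) (hν2 i)
    have hcond' : ∀ i, ((comp2 γ κ a)[fun p => p.2 i |
        MeasurableSpace.comap Prod.fst inferInstance]) =ᵐ[comp2 γ κ a] fun p => p.1 i :=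
      fun i => comp2_cond γ κ a hκ1 hκ0 i ((hYL2' i).integrable one_le_two)
        ((hXL2' i).integrable one_le_two)
    refine ⟨⟨‹_›, hmx', hmy', hcond'⟩, ?_⟩
    rw [value_decomp c hXL2' hYL2' hcond']
    congr 1
    · rw [integral_covCost_fst, comp2_map_fst]
    · refine Finset.sum_congr rfl fun i _ => Finset.sum_congr rfl fun j _ => ?_
      by_cases h : i < j
      · simp only [if_pos h, comp2_inc_integral γ κ a i j, hσ2]
      · simp [if_neg h]
  haveI hπ1prob : IsProbabilityMeasure (π.map Prod.fst) :=
    Measure.isProbabilityMeasure_map measurable_fst.aemeasurable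
  have hπ1m : ∀ i, (π.map Prod.fst).map (fun x => x i) = μ i := by
    intro i
    rw [Measure.map_map (measurable_pi_apply i) measurable_fst]
    exact hπmx i
  have hgen : ∀ γ : Measure (Vec d), IsProbabilityMeasure γ →
      (∀ i, γ.map (fun x => x i) = μ i) →
      (∫ x, covCost c x ∂γ) + (∑ i, ∑ j, if i < j then c i j * (a i * a j * σ2) else 0)
        ≤ ∫ p, covCost c p.2 ∂π := by
    intro γ hγp hγm
    obtain ⟨hmem, hval⟩ := hcomp γ hγp hγm
    have h := hπopt _ hmem
    rw [hval] at h
    exact h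
  have htermle : ∀ i j : Fin d,
      (if i < j then c i j * ∫ p, (p.2 i - p.1 i) * (p.2 j - p.1 j) ∂π else 0)
        ≤ (if i < j then c i j * (a i * a j * σ2) else 0) := by
    intro i j
    by_cases h : i < j
    · simp only [if_pos h]
      exact mul_le_mul_of_nonneg_left (hEle i j) (hc i j h)
    · simp [if_neg h]
  have hSleC : (∑ i, ∑ j,
        if i < j then c i j * ∫ p, (p.2 i - p.1 i) * (p.2 j - p.1 j) ∂π else 0)
      ≤ ∑ i, ∑ j, if i < j then c i j * (a i * a j * σ2) else 0 :=
    Finset.sum_le_sum fun i _ => Finset.sum_le_sum fun j _ => htermle i j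
  have hfsteq : ∫ p, covCost c p.1 ∂π = ∫ x, covCost c x ∂(π.map Prod.fst) :=
    integral_covCost_fst c π
  have hineq : ∀ γ : Measure (Vec d), IsProbabilityMeasure γ →
      (∀ i, γ.map (fun x => x i) = μ i) → Integrable (covCost c) γ →
      ∫ x, covCost c x ∂γ ≤ ∫ x, covCost c x ∂(π.map Prod.fst) := by
    intro γ hγp hγm _
    have h1 := hgen γ hγp hγm
    linarith [hdecompπ, hSleC, hfsteq]
  have hπ1ge := hgen (π.map Prod.fst) hπ1prob hπ1m
  have hsumeq : (∑ i, ∑ j,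
        if i < j then c i j * ∫ p, (p.2 i - p.1 i) * (p.2 j - p.1 j) ∂π else 0)
      = ∑ i, ∑ j, if i < j then c i j * (a i * a j * σ2) else 0 := by
    linarith [hdecompπ, hSleC, hfsteq, hπ1ge]
  have hterm : ∀ i j : Fin d, i < j → 0 < c i j →
      ∫ p, (p.2 i - p.1 i) * (p.2 j - p.1 j) ∂π = a i * a j * σ2 := by
    intro i j hij hcij
    have houter := (Finset.sum_eq_sum_iff_of_le
      (fun i _ => Finset.sum_le_sum fun j _ => htermle i j)).1 hsumeq i (Finset.mem_univ i)
    have hinner := (Finset.sum_eq_sum_iff_of_le (fun j _ => htermle i j)).1 houter j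
      (Finset.mem_univ j)
    simp only [if_pos hij] at hinner
    exact mul_left_cancel₀ (ne_of_gt hcij) hinner
  have hpart1 : ∀ᵐ x ∂π.fst, π.condKernel x {y : Vec d | ¬ ∃ s : ℝ, y = x + s • a} = 0 := by
    rcases Nat.eq_zero_or_pos d with hd0 | hd
    · subst hd0
      apply ae_of_all
      intro x
      have hempty : {y : Vec 0 | ¬ ∃ s : ℝ, y = x + s • a} = ∅ := by
        ext y
        constructor
        · intro h
          exact absurd ⟨0, funext fun i => i.elim0⟩ h
        · intro h
          exact h.elim
      rw [hempty]
      simp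
    · have hedge' : ∀ i j : Fin d, i < j → 0 < c i j →
          ∀ᵐ p ∂π, a j * (p.2 i - p.1 i) = a i * (p.2 j - p.1 j) := by
        intro i j hij hcij
        have hkey := covBound_key i j (hXL2 i) (hXL2 j) (hYL2 i) (hYL2 j) (ai := a i) (aj := a j) (hvar i) (hvar j)
        rw [hterm i j hij hcij] at hkey
        have hzero : ∫ p, (a j * (p.2 i - p.1 i) - a i * (p.2 j - p.1 j)) ^ 2 ∂π = 0 := by
          rw [hkey]; ring
        have hmem : MemLp (fun p : Vec d × Vec d =>
            a j * (p.2 i - p.1 i) - a i * (p.2 j - p.1 j)) 2 π :=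
          (((hYL2 i).sub (hXL2 i)).const_mul (a j)).sub
            (((hYL2 j).sub (hXL2 j)).const_mul (a i))
        have hint := hmem.integrable_sq
        have hae := (integral_eq_zero_iff_of_nonneg (fun p => sq_nonneg _) hint).1 hzero
        filter_upwards [hae] with p hp
        have hp' : (a j * (p.2 i - p.1 i) - a i * (p.2 j - p.1 j)) ^ 2 = 0 := hp
        exact sub_eq_zero.1 ((pow_eq_zero_iff two_ne_zero).1 hp')
      have hedge : ∀ i j, AdjRel c i j →
          ∀ᵐ p ∂π, a j * (p.2 i - p.1 i) = a i * (p.2 j - p.1 j) := by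
        intro i j hadj
        rcases hadj with ⟨hij, hcij⟩ | ⟨hji, hcji⟩
        · exact hedge' i j hij hcij
        · exact (hedge' j i hji hcji).mono fun p hp => hp.symm
      have hae2 := conn_ae c a ha hconn hd hedge
      have hzeroS : π {p : Vec d × Vec d | ¬ ∃ s : ℝ, p.2 = p.1 + s • a} = 0 := ae_iff.1 hae2
      exact kernel_transfer a ⟨0, hd⟩ (ne_of_gt (ha ⟨0, hd⟩)) hzeroS
  exact ⟨hpart1, hπ1m, hineq⟩

end MMOT
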